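/- For every n ≥ 1, the following factorization holds in ℝ[s,t]: (T_n(t) − T_n(s))/(t − s) = ∏_{k=1}^{⌊n/2⌋} E_{2kπ/n}(s,t), where E_μ(x,y) = x² + y² − 2cos(μ)·x·y − 4sin²(μ) for μ not a multiple of π, and E_π(x,y) = x + y. Equivalently, T_n(t) − T_n(s) = (t − s)·∏_{k=1}^{⌊n/2⌋} E_{2kπ/n}(s,t). -/

import Mathlib

open Polynomial Real

/-- The monic Chebyshev polynomials of the first kind. -/
noncomputable def T : ℕ → Polynomial ℝ
  | 0 => 2
  | 1 => X
  | n + 2 => X * T (n + 1) - T n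

/-- The Lissajous ellipse polynomial: `E μ x y = x² + y² − 2 cos μ · x y − 4 sin² μ`
for `μ ≢ 0 mod π`, with the degenerate cases `E 0 = x − y` and `E π = x + y`. -/
noncomputable def E (μ x y : ℝ) : ℝ :=
  if μ = 0 then x - y
  else if μ = Real.pi then x + y
  else x ^ 2 + y ^ 2 - 2 * Real.cos μ * x * y - 4 * Real.sin μ ^ 2

open Finset

lemma aeval_T (z : ℂ) (hz : z ≠ 0) : ∀ n : ℕ,
    aeval (z + z⁻¹) (T n) = z ^ n + z⁻¹ ^ n := by
  have key : ∀ n : ℕ, aeval (z + z⁻¹) (T n) = z ^ n + z⁻¹ ^ n ∧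
      aeval (z + z⁻¹) (T (n+1)) = z ^ (n+1) + z⁻¹ ^ (n+1) := by
    intro n
    induction n with
    | zero => refine ⟨by simp [T, map_ofNat]; norm_num, by simp [T]⟩
    | succ m ih =>
      refine ⟨ih.2, ?_⟩
      show aeval (z + z⁻¹) (T (m + 2)) = _
      rw [show T (m+2) = X * T (m+1) - T m from rfl]
      simp only [map_sub, map_mul, aeval_X, ih.1, ih.2]
      have hzz : z * z⁻¹ = 1 := mul_inv_cancel₀ hz
      linear_combination (z ^ m + z⁻¹ ^ m) * hzz
  exact fun n => (key n).1

lemma eval_T_complex (x : ℝ) (n : ℕ) : (((T n).eval x : ℝ) : ℂ) = aeval (x : ℂ) (T n) := by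
  rw [show ((x : ℂ)) = algebraMap ℝ ℂ x from rfl, Polynomial.aeval_algebraMap_apply]
  rw [show (aeval x : ℝ[X] → ℝ) (T n) = (T n).eval x from
    congrFun (Polynomial.coe_aeval_eq_eval x) (T n)]
  rfl

lemma prod_Icc_one (g : ℕ → M) [CommMonoid M] (m : ℕ) :
    ∏ k ∈ Icc 1 m, g k = ∏ i ∈ range m, g (i + 1) := by
  rw [← Finset.Ico_add_one_right_eq_Icc, Finset.prod_Ico_eq_prod_range]
  exact Finset.prod_congr (by congr 1) (fun i _ => by rw [add_comm 1 i])

lemma prod_range_pair {M : Type*} [CommMonoid M] (g : ℕ → M) (n : ℕ) (hn : 1 ≤ n) :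
    ∏ k ∈ range n, g k =
      g 0 * ∏ k ∈ Icc 1 (n / 2), (if 2 * k = n then g k else g k * g (n - k)) := by
  rcases Nat.even_or_odd n with ⟨m, hm⟩ | ⟨m, hm⟩
  · -- n = m + m, m ≥ 1
    subst hm
    have hm1 : 1 ≤ m := by omega
    have hdiv : (m + m) / 2 = m := by omega
    rw [hdiv]
    -- RHS
    rw [prod_Icc_one, show m = (m - 1) + 1 by omega, Finset.prod_range_succ,
      if_pos (by omega), show m - 1 + 1 = m by omega]
    have eR : ∏ i ∈ range (m - 1), (if 2 * (i + 1) = m + m then g (i + 1)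
        else g (i + 1) * g (m + m - (i + 1))) =
        (∏ i ∈ range (m - 1), g (i + 1)) * ∏ i ∈ range (m - 1), g (m + m - (i + 1)) := by
      rw [← Finset.prod_mul_distrib]
      exact Finset.prod_congr rfl (fun i hi => by
        simp only [Finset.mem_range] at hi; rw [if_neg (by omega)])
    rw [eR]
    -- LHS
    rw [show m + m = (m + m - 1) + 1 by omega, Finset.prod_range_succ',
      show m + m - 1 = (m - 1) + m by omega, Finset.prod_range_add]
    have e2 : ∏ i ∈ range m, g (m - 1 + i + 1) = g m * ∏ i ∈ range (m - 1), g (m + m - (i + 1)) := by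
      rw [show m = (m - 1) + 1 by omega, Finset.prod_range_succ', show m - 1 + 1 = m by omega]
      rw [mul_comm]
      congr 1
      · congr 1; omega
      · rw [← Finset.prod_range_reflect]
        exact Finset.prod_congr rfl (fun i hi => by
          simp only [Finset.mem_range] at hi; congr 1; omega)
    rw [e2, show m - 1 + m + 1 = m + m from by omega]
    simp only [mul_assoc, mul_comm, mul_left_comm]
  · -- n = 2m + 1
    subst hm
    have hdiv : (2 * m + 1) / 2 = m := by omega
    rw [hdiv, prod_Icc_one]
    rw [show 2 * m + 1 = (m + m) + 1 by omega, Finset.prod_range_succ',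
      Finset.prod_range_add, mul_comm]
    have e3 : ∏ i ∈ range m, g (m + i + 1) = ∏ i ∈ range m, g (m + m + 1 - (i + 1)) := by
      rw [← Finset.prod_range_reflect]
      exact Finset.prod_congr rfl (fun i hi => by
        simp only [Finset.mem_range] at hi; congr 1; omega)
    rw [e3, ← Finset.prod_mul_distrib]
    congr 1
    refine Finset.prod_congr rfl (fun i hi => ?_)
    simp only [Finset.mem_range] at hi
    rw [if_neg (by omega)]


lemma quad_helper (z w u : ℂ) (hz : z ≠ 0) (hw : w ≠ 0) (hu : u ≠ 0) :
    z⁻¹ * ((z - u*w)*(z - u*w⁻¹)) * (z⁻¹ * ((z - u⁻¹*w)*(z - u⁻¹*w⁻¹))) =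
      (w + w⁻¹)^2 + (z + z⁻¹)^2 - (u + u⁻¹)*(w + w⁻¹)*(z + z⁻¹) - (4 - (u + u⁻¹)^2) := by
  have h1 : z * w * (z * (u * (u * w))) ≠ 0 := by simp [hz, hw, hu]
  have h2 : (w:ℂ) ^ 2 * z ^ 2 * (u * w * z) * u ^ 2 ≠ 0 := by simp [hz, hw, hu]
  field_simp
  ring

lemma exists_half (t : ℝ) : ∃ z : ℂ, z ≠ 0 ∧ z + z⁻¹ = (t : ℂ) := by
  obtain ⟨r, hr⟩ := IsAlgClosed.exists_pow_nat_eq ((t : ℂ) ^ 2 - 4) (n := 2) (by norm_num)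
  have h2 : ((t : ℂ) + r) / 2 * (((t : ℂ) - r) / 2) = 1 := by
    field_simp
    linear_combination -hr
  refine ⟨((t : ℂ) + r) / 2, left_ne_zero_of_mul_eq_one h2, ?_⟩
  rw [inv_eq_of_mul_eq_one_right h2]
  ring

set_option maxHeartbeats 1600000 in
theorem chebyshev_diff_factorization (n : ℕ) (hn : 1 ≤ n) (s t : ℝ) :
    (T n).eval t - (T n).eval s =
      (t - s) * ∏ k ∈ Finset.Icc 1 (n / 2), E (2 * (k : ℝ) * Real.pi / n) s t := by
  have hn0 : (n : ℝ) ≠ 0 := by positivity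
  have hn0' : (n : ℂ) ≠ 0 := by exact_mod_cast hn0
  obtain ⟨z, hz, hzt⟩ := exists_half t
  obtain ⟨w, hw, hws⟩ := exists_half s
  set ζ : ℂ := Complex.exp (2 * (π : ℂ) * Complex.I / n) with hζdef
  have hζ : IsPrimitiveRoot ζ n := Complex.isPrimitiveRoot_exp n (by omega)
  have hζ0 : ζ ≠ 0 := Complex.exp_ne_zero _
  have hζn : ζ ^ n = 1 := hζ.pow_eq_one
  set g : ℕ → ℂ := fun k => z⁻¹ * ((z - ζ ^ k * w) * (z - ζ ^ k * w⁻¹)) with hgdef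
  have fact : ∀ c : ℂ, z ^ n - c ^ n = ∏ k ∈ range n, (z - ζ ^ k * c) := by
    intro c
    have h := congrArg (Polynomial.eval z)
      (X_pow_sub_C_eq_prod hζ (show 0 < n by omega) (rfl : c ^ n = c ^ n))
    simpa [Polynomial.eval_prod] using h
  have hA : (((T n).eval t : ℝ) : ℂ) - (((T n).eval s : ℝ) : ℂ) = ∏ k ∈ range n, g k := by
    have prodg : ∏ k ∈ range n, g k = z⁻¹ ^ n * ((z ^ n - w ^ n) * (z ^ n - (w⁻¹) ^ n)) := by
      simp only [hgdef]
      rw [Finset.prod_mul_distrib, Finset.prod_mul_distrib, Finset.prod_const, Finset.card_range, ← fact w, ← fact w⁻¹]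
    rw [prodg, eval_T_complex, eval_T_complex, ← hzt, ← hws, aeval_T z hz, aeval_T w hw]
    have hzn : z ^ n ≠ 0 := pow_ne_zero _ hz
    have hwn : w ^ n ≠ 0 := pow_ne_zero _ hw
    simp only [inv_pow]
    field_simp
    ring
  have hμcos : ∀ k : ℕ, ζ ^ k + (ζ ^ k)⁻¹ =
      ((2 * Real.cos (2 * (k : ℝ) * π / n) : ℝ) : ℂ) := by
    intro k
    have hexp : ζ ^ k = Complex.exp (((2 * (k : ℝ) * π / n : ℝ) : ℂ) * Complex.I) := by
      rw [hζdef, ← Complex.exp_nat_mul]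
      congr 1
      push_cast
      field_simp
    rw [hexp, ← Complex.exp_neg]
    push_cast [Complex.ofReal_cos]
    rw [Complex.two_cos]
    ring_nf
  have hC : ∀ k ∈ Icc 1 (n / 2),
      (if 2 * k = n then g k else g k * g (n - k)) =
        ((E (2 * (k : ℝ) * π / n) s t : ℝ) : ℂ) := by
    intro k hk
    simp only [Finset.mem_Icc] at hk
    have hk1 : 1 ≤ k := hk.1
    have hkn : k < n := by omega
    have hμ0 : 2 * (k : ℝ) * π / n ≠ 0 := by
      have hπ := Real.pi_pos
      have hk' : (0:ℝ) < (k:ℝ) := by exact_mod_cast hk1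
      have hn' : (0:ℝ) < (n:ℝ) := by positivity
      positivity
    by_cases h2k : 2 * k = n
    · rw [if_pos h2k]
      have hμπ : 2 * (k : ℝ) * π / n = π := by
        rw [div_eq_iff hn0, show ((n:ℝ)) = 2 * (k:ℝ) by exact_mod_cast h2k.symm]
        ring
      rw [hμπ]
      have hE : E π s t = s + t := by
        rw [E, if_neg Real.pi_ne_zero, if_pos rfl]
      rw [hE]
      have hζk : ζ ^ k = -1 := by
        rw [hζdef, ← Complex.exp_nat_mul]
        rw [show (k : ℂ) * (2 * (π : ℂ) * Complex.I / n) = (π : ℂ) * Complex.I by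
          rw [show ((n : ℂ)) = 2 * (k : ℂ) by exact_mod_cast congrArg (Nat.cast : ℕ → ℂ) h2k.symm]
          have hk0 : (k : ℂ) ≠ 0 := by exact_mod_cast Nat.cast_ne_zero.mpr (by omega)
          field_simp]
        exact Complex.exp_pi_mul_I
      simp only [hgdef, hζk]
      push_cast
      rw [← hzt, ← hws]
      field_simp
      ring
    · rw [if_neg h2k]
      have hμπ : 2 * (k : ℝ) * π / n ≠ π := by
        intro h
        apply h2k
        rw [div_eq_iff hn0] at h
        have hπ := Real.pi_ne_zero
        have : 2 * (k : ℝ) = n := by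
          have := mul_right_cancel₀ hπ (by linarith [h] : 2 * (k:ℝ) * π = (n:ℝ) * π)
          linarith
        exact_mod_cast this
      have hE : E (2 * (k : ℝ) * π / n) s t =
          s ^ 2 + t ^ 2 - 2 * Real.cos (2 * (k : ℝ) * π / n) * s * t -
            4 * (1 - Real.cos (2 * (k : ℝ) * π / n) ^ 2) := by
        rw [E, if_neg hμ0, if_neg hμπ, Real.sin_sq]
      rw [hE]
      obtain ⟨u, hu⟩ : ∃ u : ℂ, u = ζ ^ k := ⟨_, rfl⟩
      have hu0 : u ≠ 0 := by rw [hu]; exact pow_ne_zero _ hζ0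
      have hunk : ζ ^ (n - k) = u⁻¹ := by
        have h1 : u * ζ ^ (n - k) = 1 := by
          rw [hu, ← pow_add, show k + (n - k) = n by omega, hζn]
        exact (inv_eq_of_mul_eq_one_right h1).symm
      have hcos : (Real.cos (2 * (k : ℝ) * π / n) : ℂ) = (u + u⁻¹) / 2 := by
        rw [eq_div_iff (two_ne_zero (α := ℂ)), hu]
        rw [hμcos k]
        push_cast
        ring
      simp only [hgdef]
      rw [hunk, ← hu]
      push_cast at hcos ⊢
      rw [hcos, ← hzt, ← hws, quad_helper z w u hz hw hu0]
      ring
  have g0 : g 0 = ((t - s : ℝ) : ℂ) := by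
    simp only [hgdef, pow_zero, one_mul]
    push_cast
    rw [← hzt, ← hws]
    field_simp
    ring
  have key : ((((T n).eval t - (T n).eval s : ℝ)) : ℂ) =
      (((t - s) * ∏ k ∈ Icc 1 (n / 2), E (2 * (k : ℝ) * π / n) s t : ℝ) : ℂ) := by
    push_cast
    rw [hA, prod_range_pair g n hn, g0, Finset.prod_congr rfl hC]
    push_cast
    ring
  exact_mod_cast key
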